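/- arXiv:2110.15697 — 2 statements merged into one kernel-verified Lean document; each statement's English description precedes it below -/
import Mathlib

section
/- Let ζ_k > 0 and suppose ζ_k^{−1} H^{N−1}(∂Ω_{e_k}) ≤ 1 for all k = 1,…,P. Then for v ∈ H¹(Ω) and V ∈ ℝ^P, the bilinear form B_γ((v,V),(v,V)) = ∫_Ω γ|∇v|² dx + Σ_k ζ_k^{−1}∫_{∂Ω_{e_k}} v² dS − Σ_k ζ_k^{−1}∫_{∂Ω_{e_k}} v V_k dS + Σ_k V_k² satisfies B_γ((v,V),(v,V)) ≥ (1/2)min{1, γ_m}(‖∇v‖₂² + Σ_k ζ_k^{−1}∫_{∂Ω_{e_k}} v² dS + ‖V‖₂²), provided γ ∈ L^∞(Ω) with γ ≥ γ_m > 0 a.e. -/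
open MeasureTheory Set Finset
open scoped ENNReal

/-- Coercivity of the complete-electrode-model bilinear form: if
`ζ_k⁻¹ H^{N−1}(∂Ω_{e_k}) ≤ 1` and `γ ≥ γ_m > 0` a.e., then
`B_γ((v,V),(v,V)) ≥ (1/2)min{1,γ_m}(‖∇v‖₂² + Σ_k ζ_k⁻¹∫ v² dS + ‖V‖₂²)`. -/
theorem stmt9 {N P : ℕ} (Ω : Set (EuclideanSpace ℝ (Fin N))) (hΩm : MeasurableSet Ω)
    (hΩb : Bornology.IsBounded Ω)
    (e : Fin P → Set (EuclideanSpace ℝ (Fin N)))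
    (he : ∀ k, e k ⊆ frontier Ω) (hem : ∀ k, MeasurableSet (e k))
    (hefin : ∀ k, μH[(N : ℝ) - 1] (e k) ≠ ∞)
    (ζ : Fin P → ℝ) (hζ : ∀ k, 0 < ζ k)
    (hscale : ∀ k, (μH[(N : ℝ) - 1] (e k)).toReal / ζ k ≤ 1)
    (γm : ℝ) (hγm : 0 < γm)
    (γ : EuclideanSpace ℝ (Fin N) → ℝ)
    (hγtop : MemLp γ ⊤ (volume.restrict Ω))
    (hγ : ∀ᵐ x ∂(volume.restrict Ω), γm ≤ γ x)
    (v : EuclideanSpace ℝ (Fin N) → ℝ) (hv : Differentiable ℝ v)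
    (hv2 : MemLp v 2 (volume.restrict Ω))
    (hvgrad : MemLp (fun x => gradient v x) 2 (volume.restrict Ω))
    (hve : ∀ k, MemLp v 2 ((μH[(N : ℝ) - 1]).restrict (e k)))
    (V : Fin P → ℝ) :
    (1 / 2) * min 1 γm *
        ((∫ x in Ω, ‖gradient v x‖ ^ 2) +
          (∑ k, (1 / ζ k) * ∫ x in e k, (v x) ^ 2 ∂μH[(N : ℝ) - 1]) +
          ∑ k, (V k) ^ 2) ≤
      (∫ x in Ω, γ x * ‖gradient v x‖ ^ 2) +
        (∑ k, (1 / ζ k) * ∫ x in e k, (v x) ^ 2 ∂μH[(N : ℝ) - 1]) -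
        (∑ k, (1 / ζ k) * ∫ x in e k, v x * V k ∂μH[(N : ℝ) - 1]) +
        ∑ k, (V k) ^ 2 := by
  set μΩ := volume.restrict Ω with hμΩ
  set m := min 1 γm with hmdef
  have hm0 : 0 < m := lt_min one_pos hγm
  have hm1 : m ≤ 1 := min_le_left _ _
  have hmγ : m ≤ γm := min_le_right _ _
  -- gradient part
  have hgsq : Integrable (fun x => ‖gradient v x‖ ^ 2) μΩ := by
    have := (hvgrad.norm).integrable_sq
    simpa using this
  have hγbdd : ∀ᵐ x ∂μΩ, ‖γ x‖ ≤ (eLpNormEssSup γ μΩ).toReal := by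
    have h1 : ∀ᵐ x ∂μΩ, (‖γ x‖₊ : ℝ≥0∞) ≤ eLpNormEssSup γ μΩ := ae_le_eLpNormEssSup
    have hne : eLpNormEssSup γ μΩ ≠ ∞ := by
      have := hγtop.2
      rwa [eLpNorm_exponent_top, lt_top_iff_ne_top] at this
    filter_upwards [h1] with x hx
    have : (‖γ x‖₊ : ℝ≥0∞).toReal ≤ (eLpNormEssSup γ μΩ).toReal :=
      ENNReal.toReal_mono hne hx
    simpa using this
  have hγg : Integrable (fun x => γ x * ‖gradient v x‖ ^ 2) μΩ :=
    hgsq.bdd_mul hγtop.1 hγbdd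
  have hG0 : 0 ≤ ∫ x in Ω, ‖gradient v x‖ ^ 2 :=
    integral_nonneg fun x => sq_nonneg _
  have hgrad_le : γm * ∫ x in Ω, ‖gradient v x‖ ^ 2 ≤
      ∫ x in Ω, γ x * ‖gradient v x‖ ^ 2 := by
    rw [← integral_const_mul]
    refine integral_mono_ae (hgsq.const_mul γm) hγg ?_
    filter_upwards [hγ] with x hx
    exact mul_le_mul_of_nonneg_right hx (sq_nonneg _)
  -- electrode part
  have hS0 : ∀ k, 0 ≤ ∫ x in e k, (v x) ^ 2 ∂μH[(N : ℝ) - 1] :=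
    fun k => integral_nonneg fun x => sq_nonneg _
  have key : ∀ k, (1 / ζ k) * ∫ x in e k, v x * V k ∂μH[(N : ℝ) - 1] ≤
      (1 / 2) * ((1 / ζ k) * (∫ x in e k, (v x) ^ 2 ∂μH[(N : ℝ) - 1]) + (V k) ^ 2) := by
    intro k
    set ν := (μH[(N : ℝ) - 1]).restrict (e k) with hν
    haveI : IsFiniteMeasure ν := by
      constructor
      rw [hν, Measure.restrict_apply_univ]
      exact (hefin k).lt_top
    have hsq : Integrable (fun x => v x ^ 2) ν := (hve k).integrable_sq
    have hint : Integrable (fun x => v x * V k) ν := by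
      have hv1 : Integrable v ν :=
        ((hve k).mono_exponent (by norm_num : (1:ℝ≥0∞) ≤ 2)).integrable le_rfl
      exact hv1.mul_const _
    have hI : ∫ x in e k, v x * V k ∂μH[(N : ℝ) - 1] ≤
        (1 / 2) * (∫ x in e k, (v x) ^ 2 ∂μH[(N : ℝ) - 1]) +
          (1 / 2) * (V k) ^ 2 * (μH[(N : ℝ) - 1] (e k)).toReal := by
      have hmono : ∫ x, v x * V k ∂ν ≤
          ∫ x, ((1 / 2) * v x ^ 2 + (1 / 2) * (V k) ^ 2) ∂ν := by
        refine integral_mono hint ((hsq.const_mul _).add (integrable_const _)) ?_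
        intro x
        nlinarith [sq_nonneg (v x - V k)]
      rw [integral_add (hsq.const_mul _) (integrable_const _), integral_const_mul,
        integral_const] at hmono
      have hνmeas : ν Set.univ = μH[(N : ℝ) - 1] (e k) := by
        rw [hν, Measure.restrict_apply_univ]
      rw [measureReal_def, hνmeas] at hmono
      simpa [smul_eq_mul, mul_comm, mul_assoc, mul_left_comm] using hmono
    have hζk := hζ k
    have hHζ := hscale k
    have hH0 : 0 ≤ (μH[(N : ℝ) - 1] (e k)).toReal := ENNReal.toReal_nonneg
    have hstep : (1 / ζ k) * ∫ x in e k, v x * V k ∂μH[(N : ℝ) - 1] ≤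
        (1 / ζ k) * ((1 / 2) * (∫ x in e k, (v x) ^ 2 ∂μH[(N : ℝ) - 1]) +
          (1 / 2) * (V k) ^ 2 * (μH[(N : ℝ) - 1] (e k)).toReal) :=
      mul_le_mul_of_nonneg_left hI (by positivity)
    refine hstep.trans ?_
    have h2 : (1 / ζ k) * ((1 / 2) * (V k) ^ 2 * (μH[(N : ℝ) - 1] (e k)).toReal) ≤
        (1 / 2) * (V k) ^ 2 := by
      have : (μH[(N : ℝ) - 1] (e k)).toReal / ζ k ≤ 1 := hHζ
      have hVk : 0 ≤ (V k) ^ 2 := sq_nonneg _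
      rw [div_le_one hζk] at this
      rw [one_div, inv_mul_le_iff₀ hζk]
      nlinarith
    nlinarith [hS0 k, mul_pos hζk hζk]
  have hsum : ∑ k, (1 / ζ k) * ∫ x in e k, v x * V k ∂μH[(N : ℝ) - 1] ≤
      (1 / 2) * ((∑ k, (1 / ζ k) * ∫ x in e k, (v x) ^ 2 ∂μH[(N : ℝ) - 1]) +
        ∑ k, (V k) ^ 2) := by
    calc ∑ k, (1 / ζ k) * ∫ x in e k, v x * V k ∂μH[(N : ℝ) - 1]
        ≤ ∑ k, (1 / 2) * ((1 / ζ k) * (∫ x in e k, (v x) ^ 2 ∂μH[(N : ℝ) - 1]) + (V k) ^ 2) :=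
          Finset.sum_le_sum fun k _ => key k
      _ = (1 / 2) * ((∑ k, (1 / ζ k) * ∫ x in e k, (v x) ^ 2 ∂μH[(N : ℝ) - 1]) +
          ∑ k, (V k) ^ 2) := by
          rw [← Finset.mul_sum, Finset.sum_add_distrib]
  have hT2 : 0 ≤ ∑ k, (1 / ζ k) * ∫ x in e k, (v x) ^ 2 ∂μH[(N : ℝ) - 1] :=
    Finset.sum_nonneg fun k _ => mul_nonneg (one_div_nonneg.mpr (hζ k).le) (hS0 k)
  have hT3 : 0 ≤ ∑ k, (V k) ^ 2 := Finset.sum_nonneg fun k _ => sq_nonneg _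
  nlinarith [mul_le_mul_of_nonneg_right hmγ hG0, hgrad_le, hsum, hT2, hT3, hG0,
    mul_nonneg hm0.le hG0]
end

section
/- Under the assumptions of the coercivity lemma (ζ_k^{−1} H^{N−1}(∂Ω_{e_k}) ≤ 1, γ ≥ γ_m > 0 a.e., Ω bounded Lipschitz), any solution (u, I) ∈ H¹(Ω) ⊕ ℝ^P of the weak complete electrode model B_γ((u,I),(v,V)) = L(v,V) for all (v,V), with L(v,V) = Σ_k ζ_k^{−1}∫_{∂Ω_{e_k}} U_k(v − V_k) dS, satisfies ‖(u,I)‖_{ζ*} ≤ (√2/C₁)‖U‖₂, where C₁ = (1/2)min{1,γ_m} and ‖(u,I)‖_{ζ*}² = ‖∇u‖₂² + Σ_k ζ_k^{−1}∫_{∂Ω_{e_k}} u² dS + ‖I‖₂². In particular the bound is independent of γ. -/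
open MeasureTheory Set Finset
open scoped ENNReal

/-- Cauchy–Schwarz for the integral against the constant `1` on a finite measure. -/
lemma cem_cs {α : Type*} [MeasurableSpace α] (ν : Measure α) [IsFiniteMeasure ν]
    (u : α → ℝ) (hu : MemLp u 2 ν) :
    |∫ a, u a ∂ν| ≤ Real.sqrt (∫ a, u a ^ 2 ∂ν) * Real.sqrt ((ν Set.univ).toReal) := by
  have hpq : Real.HolderConjugate 2 2 := Real.holderConjugate_iff.mpr ⟨one_lt_two, by norm_num⟩
  have hnorm : MemLp (fun a => ‖u a‖) (ENNReal.ofReal 2) ν := by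
    rw [show ENNReal.ofReal 2 = 2 by norm_num]
    exact hu.norm
  have hone : MemLp (fun _ : α => (1 : ℝ)) (ENNReal.ofReal 2) ν := memLp_const 1
  have h2 := integral_mul_le_Lp_mul_Lq_of_nonneg hpq
    (Filter.Eventually.of_forall fun a => norm_nonneg (u a))
    (Filter.Eventually.of_forall fun _ => zero_le_one) hnorm hone
  simp only [mul_one, Real.one_rpow, integral_const, smul_eq_mul] at h2
  have h3 : (∫ a, ‖u a‖ ^ (2:ℝ) ∂ν) = ∫ a, u a ^ 2 ∂ν := by
    refine integral_congr_ae (Filter.Eventually.of_forall fun a => ?_)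
    show ‖u a‖ ^ (2:ℝ) = u a ^ 2
    rw [show ((2:ℝ)) = ((2:ℕ):ℝ) by norm_num, Real.rpow_natCast]
    simp [sq_abs]
  rw [h3] at h2
  calc |∫ a, u a ∂ν| ≤ ∫ a, ‖u a‖ ∂ν := by
        simpa using norm_integral_le_integral_norm (μ := ν) u
    _ ≤ (∫ a, u a ^ 2 ∂ν) ^ ((1:ℝ)/2) * ((ν Set.univ).toReal) ^ ((1:ℝ)/2) := h2
    _ = Real.sqrt (∫ a, u a ^ 2 ∂ν) * Real.sqrt ((ν Set.univ).toReal) := by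
        rw [← Real.sqrt_eq_rpow, ← Real.sqrt_eq_rpow]

/-- Purely algebraic core of the a-priori estimate for the CEM. -/
lemma cem_alg {P : ℕ} {γm : ℝ} (hγm : 0 < γm) (T G : ℝ) (hG : 0 ≤ G) (hT : γm * G ≤ T)
    (ζ A B m i U : Fin P → ℝ)
    (hζ : ∀ k, 0 < ζ k) (hA : ∀ k, 0 ≤ A k) (hm : ∀ k, 0 ≤ m k)
    (hscale : ∀ k, m k / ζ k ≤ 1)
    (hcs : ∀ k, |B k| ≤ Real.sqrt (A k) * Real.sqrt (m k))
    (heq : T + (∑ k, (1/ζ k) * A k) - (∑ k, (1/ζ k) * (B k * i k)) + (∑ k, i k ^ 2)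
        = ∑ k, (1/ζ k) * (U k * (B k - m k * i k))) :
    Real.sqrt (G + (∑ k, (1/ζ k) * A k) + ∑ k, i k ^ 2)
      ≤ (Real.sqrt 2 / ((1/2) * min 1 γm)) * Real.sqrt (∑ k, U k ^ 2) := by
  set C₁ : ℝ := (1/2) * min 1 γm with hC1
  have hC1pos : 0 < C₁ := by
    have : 0 < min 1 γm := lt_min one_pos hγm
    positivity
  set Q : ℝ := ∑ k, (1/ζ k) * A k with hQdef
  set R : ℝ := ∑ k, i k ^ 2 with hRdef
  have hζ' : ∀ k, (0:ℝ) ≤ 1 / ζ k := fun k => (one_div_pos.mpr (hζ k)).le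
  have hQ : 0 ≤ Q := Finset.sum_nonneg fun k _ => mul_nonneg (hζ' k) (hA k)
  have hR : 0 ≤ R := Finset.sum_nonneg fun k _ => sq_nonneg _
  -- scaled per-k facts
  have hbb : ∀ k, (1/ζ k) * |B k| ≤ Real.sqrt ((1/ζ k) * A k) * Real.sqrt (m k / ζ k) := by
    intro k
    have hζk := hζ k
    have h1 : (1/ζ k) * |B k| ≤ (1/ζ k) * (Real.sqrt (A k) * Real.sqrt (m k)) :=
      mul_le_mul_of_nonneg_left (hcs k) (hζ' k)
    have hsq : (1/ζ k : ℝ) = Real.sqrt (1/ζ k) * Real.sqrt (1/ζ k) :=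
      (Real.mul_self_sqrt (hζ' k)).symm
    have e1 : Real.sqrt ((1/ζ k) * A k) = Real.sqrt (1/ζ k) * Real.sqrt (A k) :=
      Real.sqrt_mul (hζ' k) _
    have e2 : Real.sqrt (m k / ζ k) = Real.sqrt (m k) * Real.sqrt (1/ζ k) := by
      rw [← Real.sqrt_mul (hm k), mul_one_div]
    calc (1/ζ k) * |B k| ≤ (1/ζ k) * (Real.sqrt (A k) * Real.sqrt (m k)) := h1
      _ = Real.sqrt ((1/ζ k) * A k) * Real.sqrt (m k / ζ k) := by
          rw [e1, e2]
          conv_lhs => rw [hsq]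
          ring
  have hroot1 : ∀ k, Real.sqrt (m k / ζ k) ≤ 1 := fun k => by
    simpa using Real.sqrt_le_sqrt (hscale k)
  have hbb' : ∀ k, (1/ζ k) * |B k| ≤ Real.sqrt ((1/ζ k) * A k) := fun k =>
    (hbb k).trans (by
      simpa using mul_le_mul_of_nonneg_left (hroot1 k) (Real.sqrt_nonneg ((1/ζ k) * A k)))
  -- key1 : cross-term bound
  have key1 : ∀ k, (1/ζ k) * (B k * i k) ≤ (1/2) * ((1/ζ k) * A k + i k ^ 2) := by
    intro k
    have h1 : (1/ζ k) * (B k * i k) ≤ ((1/ζ k) * |B k|) * |i k| := by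
      have : B k * i k ≤ |B k| * |i k| := (le_abs_self _).trans (abs_mul _ _).le
      calc (1/ζ k) * (B k * i k) ≤ (1/ζ k) * (|B k| * |i k|) :=
            mul_le_mul_of_nonneg_left this (hζ' k)
        _ = ((1/ζ k) * |B k|) * |i k| := by ring
    have h2 : ((1/ζ k) * |B k|) * |i k| ≤ Real.sqrt ((1/ζ k) * A k) * |i k| :=
      mul_le_mul_of_nonneg_right (hbb' k) (abs_nonneg _)
    have h3 : 2 * (Real.sqrt ((1/ζ k) * A k) * |i k|) ≤ (1/ζ k) * A k + i k ^ 2 := by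
      have := two_mul_le_add_sq (Real.sqrt ((1/ζ k) * A k)) (|i k|)
      rwa [Real.sq_sqrt (mul_nonneg (hζ' k) (hA k)), sq_abs, mul_assoc] at this
    linarith
  -- key2 : RHS term bound
  have key2 : ∀ k, (1/ζ k) * (U k * (B k - m k * i k))
      ≤ |U k| * (Real.sqrt ((1/ζ k) * A k) + |i k|) := by
    intro k
    have h0 : (1/ζ k) * (U k * (B k - m k * i k))
        ≤ |U k| * ((1/ζ k) * |B k| + (m k / ζ k) * |i k|) := by
      have h1 : (1/ζ k) * (U k * (B k - m k * i k)) ≤ (1/ζ k) * (|U k| * |B k - m k * i k|) := by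
        refine mul_le_mul_of_nonneg_left ?_ (hζ' k)
        exact (le_abs_self _).trans (abs_mul _ _).le
      have h2 : |B k - m k * i k| ≤ |B k| + m k * |i k| := by
        calc |B k - m k * i k| ≤ |B k| + |m k * i k| := abs_sub _ _
          _ = |B k| + m k * |i k| := by rw [abs_mul, abs_of_nonneg (hm k)]
      calc (1/ζ k) * (U k * (B k - m k * i k))
          ≤ (1/ζ k) * (|U k| * |B k - m k * i k|) := h1
        _ ≤ (1/ζ k) * (|U k| * (|B k| + m k * |i k|)) := by
            refine mul_le_mul_of_nonneg_left ?_ (hζ' k)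
            exact mul_le_mul_of_nonneg_left h2 (abs_nonneg _)
        _ = |U k| * ((1/ζ k) * |B k| + (m k / ζ k) * |i k|) := by
            field_simp
    refine h0.trans (mul_le_mul_of_nonneg_left ?_ (abs_nonneg _))
    have h3 : (m k / ζ k) * |i k| ≤ |i k| := by
      simpa using mul_le_mul_of_nonneg_right (hscale k) (abs_nonneg (i k))
    exact add_le_add (hbb' k) h3
  -- lower bound of the bilinear form
  have hlow : γm * G + (1/2) * (Q + R)
      ≤ T + Q - (∑ k, (1/ζ k) * (B k * i k)) + R := by
    have hS : (∑ k, (1/ζ k) * (B k * i k)) ≤ (1/2) * (Q + R) := by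
      calc (∑ k, (1/ζ k) * (B k * i k)) ≤ ∑ k, (1/2) * ((1/ζ k) * A k + i k ^ 2) :=
            Finset.sum_le_sum fun k _ => key1 k
        _ = (1/2) * (Q + R) := by rw [hQdef, hRdef, ← Finset.sum_add_distrib, Finset.mul_sum]
    linarith
  -- upper bound of the load
  set c : Fin P → ℝ := fun k => Real.sqrt ((1/ζ k) * A k) + |i k| with hcdef
  have hcnn : ∀ k, 0 ≤ c k := fun k => add_nonneg (Real.sqrt_nonneg _) (abs_nonneg _)
  have hup1 : (∑ k, (1/ζ k) * (U k * (B k - m k * i k))) ≤ ∑ k, |U k| * c k :=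
    Finset.sum_le_sum fun k _ => key2 k
  have hc2 : (∑ k, c k ^ 2) ≤ 2 * (Q + R) := by
    calc (∑ k, c k ^ 2) ≤ ∑ k, 2 * ((1/ζ k) * A k + i k ^ 2) := by
          refine Finset.sum_le_sum fun k _ => ?_
          have h3 := two_mul_le_add_sq (Real.sqrt ((1/ζ k) * A k)) (|i k|)
          have h4 : Real.sqrt ((1/ζ k) * A k) ^ 2 = (1/ζ k) * A k :=
            Real.sq_sqrt (mul_nonneg (hζ' k) (hA k))
          rw [h4, sq_abs] at h3
          have h5 : (c k) ^ 2 = Real.sqrt ((1/ζ k) * A k) ^ 2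
              + 2 * Real.sqrt ((1/ζ k) * A k) * |i k| + |i k| ^ 2 := by
            simp only [hcdef]; ring
          rw [h5, h4, sq_abs]
          linarith
      _ = 2 * (Q + R) := by rw [hQdef, hRdef, ← Finset.sum_add_distrib, Finset.mul_sum]
  have hup2 : (∑ k, |U k| * c k) ≤ Real.sqrt (∑ k, U k ^ 2) * Real.sqrt (∑ k, c k ^ 2) := by
    have h := Finset.sum_mul_sq_le_sq_mul_sq Finset.univ (fun k => |U k|) c
    simp only [sq_abs] at h
    have hnn : 0 ≤ ∑ k, |U k| * c k :=
      Finset.sum_nonneg fun k _ => mul_nonneg (abs_nonneg _) (hcnn k)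
    rw [← Real.sqrt_mul (Finset.sum_nonneg fun k _ => sq_nonneg (U k))]
    exact (Real.le_sqrt hnn (mul_nonneg (Finset.sum_nonneg fun k _ => sq_nonneg (U k)) (Finset.sum_nonneg fun k _ => sq_nonneg (c k)))).mpr h
  have hup3 : Real.sqrt (∑ k, c k ^ 2) ≤ Real.sqrt 2 * Real.sqrt (G + Q + R) := by
    calc Real.sqrt (∑ k, c k ^ 2) ≤ Real.sqrt (2 * (G + Q + R)) := by
          apply Real.sqrt_le_sqrt
          nlinarith [hc2, hG]
      _ = Real.sqrt 2 * Real.sqrt (G + Q + R) := Real.sqrt_mul (by norm_num) _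
  -- combine
  set X : ℝ := Real.sqrt (G + Q + R) with hXdef
  have hXnn : 0 ≤ X := Real.sqrt_nonneg _
  have hX2 : X ^ 2 = G + Q + R := Real.sq_sqrt (by linarith)
  have hmain : C₁ * X ^ 2 ≤ (Real.sqrt 2 * Real.sqrt (∑ k, U k ^ 2)) * X := by
    have h1 : C₁ * (G + Q + R) ≤ γm * G + (1/2) * (Q + R) := by
      have hm1 : min 1 γm ≤ 1 := min_le_left _ _
      have hm2 : min 1 γm ≤ γm := min_le_right _ _
      nlinarith [mul_le_mul_of_nonneg_right hm2 hG, mul_le_mul_of_nonneg_right hm1 (add_nonneg hQ hR), mul_nonneg hγm.le hG]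
    have h2 : (∑ k, (1/ζ k) * (U k * (B k - m k * i k)))
        ≤ Real.sqrt (∑ k, U k ^ 2) * (Real.sqrt 2 * X) := by
      calc (∑ k, (1/ζ k) * (U k * (B k - m k * i k))) ≤ ∑ k, |U k| * c k := hup1
        _ ≤ Real.sqrt (∑ k, U k ^ 2) * Real.sqrt (∑ k, c k ^ 2) := hup2
        _ ≤ Real.sqrt (∑ k, U k ^ 2) * (Real.sqrt 2 * X) :=
            mul_le_mul_of_nonneg_left hup3 (Real.sqrt_nonneg _)
    rw [hX2]
    calc C₁ * (G + Q + R) ≤ γm * G + (1/2) * (Q + R) := h1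
      _ ≤ T + Q - (∑ k, (1/ζ k) * (B k * i k)) + R := hlow
      _ = ∑ k, (1/ζ k) * (U k * (B k - m k * i k)) := heq
      _ ≤ Real.sqrt (∑ k, U k ^ 2) * (Real.sqrt 2 * X) := h2
      _ = (Real.sqrt 2 * Real.sqrt (∑ k, U k ^ 2)) * X := by ring
  rcases eq_or_lt_of_le hXnn with h0 | hXpos
  · rw [← h0]
    positivity
  · have h3 : C₁ * X ≤ Real.sqrt 2 * Real.sqrt (∑ k, U k ^ 2) := by
      have := hmain
      rw [pow_two, ← mul_assoc] at this
      exact le_of_mul_le_mul_right this hXpos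
    rw [div_mul_eq_mul_div, le_div_iff₀ hC1pos]
    linarith [h3]

/-- A-priori bound for the complete electrode model: under the coercivity assumptions
(`ζ_k⁻¹ H^{N−1}(∂Ω_{e_k}) ≤ 1`, `γ ≥ γ_m > 0` a.e.), any weak solution `(u, I)` of
`B_γ((u,I),(v,V)) = L(v,V)` satisfies `‖(u,I)‖_{ζ*} ≤ (√2/C₁)‖U‖₂` with
`C₁ = (1/2)min{1,γ_m}`; in particular the bound is independent of `γ`. -/
theorem stmt10 {N P : ℕ} (Ω : Set (EuclideanSpace ℝ (Fin N))) (hΩm : MeasurableSet Ω)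
    (hΩb : Bornology.IsBounded Ω)
    (e : Fin P → Set (EuclideanSpace ℝ (Fin N)))
    (he : ∀ k, e k ⊆ frontier Ω) (hem : ∀ k, MeasurableSet (e k))
    (hefin : ∀ k, μH[(N : ℝ) - 1] (e k) ≠ ∞)
    (ζ : Fin P → ℝ) (hζ : ∀ k, 0 < ζ k)
    (hscale : ∀ k, (μH[(N : ℝ) - 1] (e k)).toReal / ζ k ≤ 1)
    (γm : ℝ) (hγm : 0 < γm)
    (γ : EuclideanSpace ℝ (Fin N) → ℝ)
    (hγtop : MemLp γ ⊤ (volume.restrict Ω))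
    (hγ : ∀ᵐ x ∂(volume.restrict Ω), γm ≤ γ x)
    (U : Fin P → ℝ)
    (u : EuclideanSpace ℝ (Fin N) → ℝ) (I : Fin P → ℝ)
    (hu : Differentiable ℝ u)
    (hu2 : MemLp u 2 (volume.restrict Ω))
    (hugrad : MemLp (fun x => gradient u x) 2 (volume.restrict Ω))
    (hue : ∀ k, MemLp u 2 ((μH[(N : ℝ) - 1]).restrict (e k)))
    (hsol : ∀ (v : EuclideanSpace ℝ (Fin N) → ℝ) (V : Fin P → ℝ), Differentiable ℝ v →
      (∫ x in Ω, γ x * inner (𝕜 := ℝ) (gradient u x) (gradient v x)) +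
          (∑ k, (1 / ζ k) * ∫ x in e k, u x * v x ∂μH[(N : ℝ) - 1]) -
          (∑ k, (1 / ζ k) * ∫ x in e k, u x * V k ∂μH[(N : ℝ) - 1]) +
          (∑ k, I k * V k) =
        ∑ k, (1 / ζ k) * ∫ x in e k, U k * (v x - V k) ∂μH[(N : ℝ) - 1]) :
    Real.sqrt ((∫ x in Ω, ‖gradient u x‖ ^ 2) +
        (∑ k, (1 / ζ k) * ∫ x in e k, (u x) ^ 2 ∂μH[(N : ℝ) - 1]) +
        ∑ k, (I k) ^ 2) ≤
      (Real.sqrt 2 / ((1 / 2) * min 1 γm)) * Real.sqrt (∑ k, (U k) ^ 2) := by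
  have hfin : ∀ k, IsFiniteMeasure ((μH[(N : ℝ) - 1]).restrict (e k)) := fun k =>
    ⟨by rw [Measure.restrict_apply_univ]; exact (hefin k).lt_top⟩
  have hInt : ∀ k, Integrable u ((μH[(N : ℝ) - 1]).restrict (e k)) := fun k => by
    haveI := hfin k; exact (hue k).integrable one_le_two
  have hRHSk : ∀ k, (∫ x in e k, U k * (u x - I k) ∂μH[(N : ℝ) - 1])
      = U k * ((∫ x in e k, u x ∂μH[(N : ℝ) - 1]) - (μH[(N : ℝ) - 1] (e k)).toReal * I k) := by
    intro k
    haveI := hfin k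
    rw [integral_const_mul, integral_sub (hInt k) (integrable_const _), setIntegral_const,
      smul_eq_mul, Measure.real]
  have heq := hsol u I hu
  simp only [← pow_two, integral_mul_const, hRHSk, real_inner_self_eq_norm_sq] at heq
  -- integrability of the gradient terms
  have hsqgrad : Integrable (fun x => ‖gradient u x‖ ^ 2) (volume.restrict Ω) :=
    (memLp_two_iff_integrable_sq_norm hugrad.1).mp hugrad
  have hbd : ∀ᵐ x ∂(volume.restrict Ω),
      ‖γ x‖ ≤ (eLpNormEssSup γ (volume.restrict Ω)).toReal := by
    have h1 : eLpNormEssSup γ (volume.restrict Ω) ≠ ∞ := by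
      have h2 := hγtop.2
      rw [eLpNorm_exponent_top] at h2
      exact h2.ne
    filter_upwards [ae_le_eLpNormEssSup (f := γ) (μ := volume.restrict Ω)] with x hx
    have := ENNReal.toReal_mono h1 hx
    simpa using this
  have hγgrad : Integrable (fun x => γ x * ‖gradient u x‖ ^ 2) (volume.restrict Ω) :=
    Integrable.bdd_mul hsqgrad hγtop.1 hbd
  have hT : γm * (∫ x in Ω, ‖gradient u x‖ ^ 2) ≤ ∫ x in Ω, γ x * ‖gradient u x‖ ^ 2 := by
    rw [← integral_const_mul]
    refine integral_mono_ae (hsqgrad.const_mul γm) hγgrad ?_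
    filter_upwards [hγ] with x hx
    exact mul_le_mul_of_nonneg_right hx (sq_nonneg _)
  have hG : 0 ≤ ∫ x in Ω, ‖gradient u x‖ ^ 2 := integral_nonneg fun x => sq_nonneg _
  have hA : ∀ k, 0 ≤ ∫ x in e k, (u x) ^ 2 ∂μH[(N : ℝ) - 1] := fun k =>
    integral_nonneg fun x => sq_nonneg _
  have hcs : ∀ k, |∫ x in e k, u x ∂μH[(N : ℝ) - 1]|
      ≤ Real.sqrt (∫ x in e k, (u x) ^ 2 ∂μH[(N : ℝ) - 1])
        * Real.sqrt ((μH[(N : ℝ) - 1] (e k)).toReal) := fun k => by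
    haveI := hfin k
    have h := cem_cs ((μH[(N : ℝ) - 1]).restrict (e k)) u (hue k)
    rwa [Measure.restrict_apply_univ] at h
  exact cem_alg hγm _ _ hG hT ζ
    (fun k => ∫ x in e k, (u x) ^ 2 ∂μH[(N : ℝ) - 1])
    (fun k => ∫ x in e k, u x ∂μH[(N : ℝ) - 1])
    (fun k => (μH[(N : ℝ) - 1] (e k)).toReal) I U
    hζ hA (fun k => ENNReal.toReal_nonneg) hscale hcs heq
end
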